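/- Let x = (σ,v) be an involution of W(C̃_n) with labelled cycle type (m, k_e, k_o, l). Then x belongs to B̄(B̃_n) if and only if k_e is even. Moreover, if x and x′ are involutions of B̄(B̃_n) and the labelled cycle type of x satisfies k_e > 0 or l > 0, then x and x′ are conjugate in B̄(B̃_n) if and only if they have the same labelled cycle type. -/

import Mathlib

noncomputable section

open Equiv Finset

/-- Points `±1, …, ±n`, encoded as a sign together with an index. -/
abbrev Pt (n : ℕ) := ℤˣ × Fin n

/-- Negation of a point. -/
def negPt {n : ℕ} (x : Pt n) : Pt n := (-x.1, x.2)

/-- The hyperoctahedral group `H_n` of signed permutations: bijections `σ` of `{±1,…,±n}`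
with `σ(-i) = -σ(i)`. -/
def Hgrp (n : ℕ) : Subgroup (Equiv.Perm (Pt n)) where
  carrier := {σ | ∀ x, σ (negPt x) = negPt (σ x)}
  one_mem' := fun _ => rfl
  mul_mem' := by
    intro σ τ hσ hτ x
    have hσ' : ∀ y, σ (negPt y) = negPt (σ y) := hσ
    have hτ' : ∀ y, τ (negPt y) = negPt (τ y) := hτ
    simp only [Equiv.Perm.mul_apply]
    rw [hτ' x, hσ' (τ x)]
  inv_mem' := by
    intro σ hσ x
    have hσ' : ∀ y, σ (negPt y) = negPt (σ y) := hσ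
    apply σ.injective
    rw [hσ']; simp

lemma Hgrp_apply {n : ℕ} {σ : Equiv.Perm (Pt n)} (hσ : σ ∈ Hgrp n) (δ : ℤˣ) (k : Fin n) :
    σ (δ, k) = (δ * (σ (1, k)).1, (σ (1, k)).2) := by
  have hσ' : ∀ y, σ (negPt y) = negPt (σ y) := hσ
  rcases Int.units_eq_one_or δ with h | h <;> subst h
  · simp
  · have h2 := hσ' (1, k)
    simp only [negPt] at h2
    simpa using h2

/-- The (right) action of a signed permutation on integer vectors:
`(v^σ)_j = ε·v_i` whenever `σ(i) = ε j`. -/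
def actV {n : ℕ} (σ : Equiv.Perm (Pt n)) (v : Fin n → ℤ) : Fin n → ℤ :=
  fun j => ((σ (1, j)).1 : ℤ) * v (σ (1, j)).2

lemma actV_add {n : ℕ} (σ : Equiv.Perm (Pt n)) (a b : Fin n → ℤ) :
    actV σ (a + b) = actV σ a + actV σ b := by
  funext j; simp [actV, mul_add]

lemma actV_zero {n : ℕ} (σ : Equiv.Perm (Pt n)) : actV σ 0 = 0 := by
  funext j; simp [actV]

lemma actV_neg {n : ℕ} (σ : Equiv.Perm (Pt n)) (v : Fin n → ℤ) :
    actV σ (-v) = -actV σ v := by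
  funext j; simp [actV]

lemma actV_one {n : ℕ} (v : Fin n → ℤ) : actV 1 v = v := by
  funext j; simp [actV]

lemma actV_mul {n : ℕ} {σ : Equiv.Perm (Pt n)} (hσ : σ ∈ Hgrp n) (τ : Equiv.Perm (Pt n))
    (v : Fin n → ℤ) : actV (σ * τ) v = actV τ (actV σ v) := by
  funext j
  have h := Hgrp_apply hσ (τ (1, j)).1 (τ (1, j)).2
  rw [Prod.mk.eta] at h
  simp only [actV, Equiv.Perm.mul_apply, h]
  push_cast
  ring

/-- The affine Weyl group of type `C̃ₙ`: pairs `(σ, v)` with `σ` a signed permutation and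
`v ∈ ℤⁿ`, with multiplication `(σ,v)(τ,u) = (στ, v^τ + u)`. -/
@[ext] structure WC (n : ℕ) where
  sigma : Hgrp n
  vec : Fin n → ℤ

namespace WC

variable {n : ℕ}

instance : Mul (WC n) :=
  ⟨fun x y => ⟨x.sigma * y.sigma, actV (y.sigma : Equiv.Perm (Pt n)) x.vec + y.vec⟩⟩

instance : One (WC n) := ⟨⟨1, 0⟩⟩

instance : Inv (WC n) :=
  ⟨fun x => ⟨x.sigma⁻¹, -actV ((x.sigma⁻¹ : Hgrp n) : Equiv.Perm (Pt n)) x.vec⟩⟩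

@[simp] lemma mul_sigma (x y : WC n) : (x * y).sigma = x.sigma * y.sigma := rfl
@[simp] lemma mul_vec (x y : WC n) :
    (x * y).vec = actV (y.sigma : Equiv.Perm (Pt n)) x.vec + y.vec := rfl
@[simp] lemma one_sigma : (1 : WC n).sigma = 1 := rfl
@[simp] lemma one_vec : (1 : WC n).vec = 0 := rfl
@[simp] lemma inv_sigma (x : WC n) : (x⁻¹).sigma = x.sigma⁻¹ := rfl
@[simp] lemma inv_vec (x : WC n) :
    (x⁻¹).vec = -actV ((x.sigma⁻¹ : Hgrp n) : Equiv.Perm (Pt n)) x.vec := rfl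

instance : Group (WC n) where
  mul_assoc a b c := by
    refine WC.ext ?_ ?_
    · exact mul_assoc _ _ _
    · show actV (c.sigma : Equiv.Perm (Pt n))
          (actV (b.sigma : Equiv.Perm (Pt n)) a.vec + b.vec) + c.vec
        = actV (((b.sigma * c.sigma : Hgrp n)) : Equiv.Perm (Pt n)) a.vec
          + (actV (c.sigma : Equiv.Perm (Pt n)) b.vec + c.vec)
      rw [actV_add]
      have hc : (((b.sigma * c.sigma : Hgrp n)) : Equiv.Perm (Pt n))
          = (b.sigma : Equiv.Perm (Pt n)) * (c.sigma : Equiv.Perm (Pt n)) := rfl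
      rw [hc, actV_mul b.sigma.2]
      abel
  one_mul a := by
    refine WC.ext (one_mul _) ?_
    show actV (a.sigma : Equiv.Perm (Pt n)) 0 + a.vec = a.vec
    rw [actV_zero, zero_add]
  mul_one a := by
    refine WC.ext (mul_one _) ?_
    show actV ((1 : Hgrp n) : Equiv.Perm (Pt n)) a.vec + 0 = a.vec
    have h1 : ((1 : Hgrp n) : Equiv.Perm (Pt n)) = 1 := rfl
    rw [h1, actV_one, add_zero]
  inv_mul_cancel a := by
    refine WC.ext (inv_mul_cancel _) ?_
    show actV (a.sigma : Equiv.Perm (Pt n))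
        (-actV ((a.sigma⁻¹ : Hgrp n) : Equiv.Perm (Pt n)) a.vec) + a.vec = 0
    rw [actV_neg, ← actV_mul (a.sigma⁻¹ : Hgrp n).2]
    have h1 : ((a.sigma⁻¹ : Hgrp n) : Equiv.Perm (Pt n)) * (a.sigma : Equiv.Perm (Pt n)) = 1 := by
      rw [← Subgroup.coe_mul, inv_mul_cancel, Subgroup.coe_one]
    rw [h1, actV_one, neg_add_cancel]

end WC

/-- `Σw`: the coordinate sum of the translation part. -/
def sumV {n : ℕ} (x : WC n) : ℤ := ∑ i, x.vec i

/-- `minus(w)`: the number of `i ∈ {1,…,n}` with `σ(i) < 0`. -/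
def minusCard {n : ℕ} (x : WC n) : ℕ :=
  (Finset.univ.filter fun i : Fin n => ((x.sigma : Equiv.Perm (Pt n)) (1, i)).1 = -1).card
lemma permOf_bij {n : ℕ} (σ : Hgrp n) :
    Function.Bijective (fun i : Fin n => ((σ : Equiv.Perm (Pt n)) (1, i)).2) := by
  rw [Fintype.bijective_iff_injective_and_card]
  refine ⟨?_, rfl⟩
  intro i j hij
  simp only at hij
  have hmem : ∀ y, (σ : Equiv.Perm (Pt n)) (negPt y) = negPt ((σ : Equiv.Perm (Pt n)) y) := σ.2
  by_cases h1 : ((σ : Equiv.Perm (Pt n)) (1, i)).1 = ((σ : Equiv.Perm (Pt n)) (1, j)).1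
  · have heq : (σ : Equiv.Perm (Pt n)) (1, i) = (σ : Equiv.Perm (Pt n)) (1, j) :=
      Prod.ext h1 hij
    have h2 := (σ : Equiv.Perm (Pt n)).injective heq
    exact congrArg Prod.snd h2
  · exfalso
    have hfst : ((σ : Equiv.Perm (Pt n)) (1, i)).1 = -((σ : Equiv.Perm (Pt n)) (1, j)).1 := by
      rcases Int.units_eq_one_or ((σ : Equiv.Perm (Pt n)) (1, i)).1 with ha | ha <;>
        rcases Int.units_eq_one_or ((σ : Equiv.Perm (Pt n)) (1, j)).1 with hb | hb <;>
        first
          | exact absurd (ha.trans hb.symm) h1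
          | simp [ha, hb]
    have hne : (σ : Equiv.Perm (Pt n)) (1, i) = negPt ((σ : Equiv.Perm (Pt n)) (1, j)) :=
      Prod.ext hfst hij
    rw [← hmem (1, j)] at hne
    have h3 := (σ : Equiv.Perm (Pt n)).injective hne
    have h4 := congrArg Prod.fst h3
    simp only [negPt] at h4
    exact absurd h4 (by decide)

/-- The underlying (unsigned) permutation of `{1,…,n}` induced by a signed permutation. -/
def permOf {n : ℕ} (σ : Hgrp n) : Equiv.Perm (Fin n) :=
  Equiv.ofBijective _ (permOf_bij σ)

@[simp] lemma permOf_apply {n : ℕ} (σ : Hgrp n) (i : Fin n) :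
    permOf σ i = ((σ : Equiv.Perm (Pt n)) (1, i)).2 := rfl

lemma unitsCast_zmod2 (ε : ℤˣ) : (((ε : ℤ) : ZMod 2)) = 1 := by
  rcases Int.units_eq_one_or ε with h | h <;> subst h <;> decide

lemma sumV_mul {n : ℕ} (x y : WC n) :
    ((sumV (x * y) : ℤ) : ZMod 2) = ((sumV x : ℤ) : ZMod 2) + ((sumV y : ℤ) : ZMod 2) := by
  have key : ∀ (σ : Hgrp n) (v : Fin n → ℤ),
      (∑ i, ((actV (σ : Equiv.Perm (Pt n)) v i : ℤ) : ZMod 2)) = ∑ i, ((v i : ℤ) : ZMod 2) := by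
    intro σ v
    have hterm : ∀ i, ((actV (σ : Equiv.Perm (Pt n)) v i : ℤ) : ZMod 2)
        = ((v (permOf σ i) : ℤ) : ZMod 2) := by
      intro i
      show ((((((σ : Equiv.Perm (Pt n)) (1, i)).1 : ℤ)) * v (((σ : Equiv.Perm (Pt n)) (1, i)).2) : ℤ) : ZMod 2) = _
      push_cast
      rw [unitsCast_zmod2, one_mul]
      rfl
    rw [Finset.sum_congr rfl (fun i _ => hterm i)]
    exact Equiv.sum_comp (permOf σ) (fun i => ((v i : ℤ) : ZMod 2))
  have hvec : (x * y).vec = actV (y.sigma : Equiv.Perm (Pt n)) x.vec + y.vec := rfl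
  unfold sumV
  rw [hvec]
  have hsplit : (∑ i, (actV (y.sigma : Equiv.Perm (Pt n)) x.vec + y.vec) i)
      = (∑ i, actV (y.sigma : Equiv.Perm (Pt n)) x.vec i) + ∑ i, y.vec i := by
    rw [← Finset.sum_add_distrib]; rfl
  rw [hsplit]
  push_cast
  rw [key y.sigma x.vec]

lemma minusCard_one {n : ℕ} : minusCard (1 : WC n) = 0 := by
  unfold minusCard
  rw [Finset.card_eq_zero, Finset.filter_eq_empty_iff]
  intro i _
  show ¬ (((1 : Hgrp n) : Equiv.Perm (Pt n)) (1, i)).1 = -1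
  simp only [OneMemClass.coe_one, Equiv.Perm.one_apply]
  decide

lemma ite_units_mul (u w : ℤˣ) :
    ((if u * w = -1 then (1 : ZMod 2) else 0)) =
      (if u = -1 then (1 : ZMod 2) else 0) + (if w = -1 then (1 : ZMod 2) else 0) := by
  rcases Int.units_eq_one_or u with h | h <;> rcases Int.units_eq_one_or w with h' | h' <;>
    subst h <;> subst h' <;> decide

lemma minusCard_mul {n : ℕ} (x y : WC n) :
    ((minusCard (x * y) : ℕ) : ZMod 2) = (minusCard x : ZMod 2) + (minusCard y : ZMod 2) := by
  have hσ : ∀ i : Fin n, ((x * y).sigma : Equiv.Perm (Pt n)) (1, i)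
      = (x.sigma : Equiv.Perm (Pt n)) ((y.sigma : Equiv.Perm (Pt n)) (1, i)) := fun i => rfl
  unfold minusCard
  rw [Finset.card_filter, Finset.card_filter, Finset.card_filter]
  push_cast
  have step : ∀ i : Fin n,
      ((if (((x * y).sigma : Equiv.Perm (Pt n)) (1, i)).1 = -1 then (1 : ZMod 2) else 0))
      = (if ((y.sigma : Equiv.Perm (Pt n)) (1, i)).1 = -1 then (1 : ZMod 2) else 0)
        + (if ((x.sigma : Equiv.Perm (Pt n)) (1, permOf y.sigma i)).1 = -1
            then (1 : ZMod 2) else 0) := by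
    intro i
    rw [hσ i]
    have h := Hgrp_apply x.sigma.2 ((y.sigma : Equiv.Perm (Pt n)) (1, i)).1
      ((y.sigma : Equiv.Perm (Pt n)) (1, i)).2
    rw [Prod.mk.eta] at h
    rw [h]
    exact ite_units_mul _ _
  calc (∑ i : Fin n, if (((x * y).sigma : Equiv.Perm (Pt n)) (1, i)).1 = -1
          then (1 : ZMod 2) else 0)
      = ∑ i : Fin n, ((if ((y.sigma : Equiv.Perm (Pt n)) (1, i)).1 = -1 then (1 : ZMod 2) else 0)
        + (if ((x.sigma : Equiv.Perm (Pt n)) (1, permOf y.sigma i)).1 = -1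
            then (1 : ZMod 2) else 0)) := Finset.sum_congr rfl (fun i _ => step i)
    _ = (∑ i : Fin n, if ((y.sigma : Equiv.Perm (Pt n)) (1, i)).1 = -1 then (1 : ZMod 2) else 0)
        + ∑ i : Fin n, (if ((x.sigma : Equiv.Perm (Pt n)) (1, permOf y.sigma i)).1 = -1
            then (1 : ZMod 2) else 0) := Finset.sum_add_distrib
    _ = (∑ i : Fin n, if ((x.sigma : Equiv.Perm (Pt n)) (1, i)).1 = -1 then (1 : ZMod 2) else 0)
        + ∑ i : Fin n, (if ((y.sigma : Equiv.Perm (Pt n)) (1, i)).1 = -1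
            then (1 : ZMod 2) else 0) := by
          rw [add_comm]
          congr 1
          exact Equiv.sum_comp (permOf y.sigma)
            (fun k => if ((x.sigma : Equiv.Perm (Pt n)) (1, k)).1 = -1 then (1 : ZMod 2) else 0)
lemma even_int_iff_zmod {a : ℤ} : Even a ↔ ((a : ZMod 2) = 0) := by
  rw [ZMod.intCast_zmod_eq_zero_iff_dvd a 2, Int.even_iff]
  push_cast
  omega

lemma sumV_one {n : ℕ} : sumV (1 : WC n) = 0 := by simp [sumV]

/-- The affine Weyl group of type `B̃ₙ`: the elements `w` of `W(C̃ₙ)` with `Σw` even. -/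
def WB (n : ℕ) : Subgroup (WC n) where
  carrier := {w | Even (sumV w)}
  one_mem' := by
    show Even (sumV (1 : WC n))
    rw [sumV_one]
    exact Even.zero
  mul_mem' := by
    intro a b ha hb
    have ha' : ((sumV a : ℤ) : ZMod 2) = 0 := even_int_iff_zmod.mp ha
    have hb' : ((sumV b : ℤ) : ZMod 2) = 0 := even_int_iff_zmod.mp hb
    refine even_int_iff_zmod.mpr ?_
    rw [sumV_mul, ha', hb', add_zero]
  inv_mem' := by
    intro a ha
    have ha' : ((sumV a : ℤ) : ZMod 2) = 0 := even_int_iff_zmod.mp ha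
    refine even_int_iff_zmod.mpr ?_
    have h1 := sumV_mul a⁻¹ a
    rw [inv_mul_cancel, sumV_one, ha', add_zero] at h1
    simpa using h1.symm

lemma intModEq_two_iff {a b : ℤ} : a ≡ b [ZMOD 2] ↔ ((a : ZMod 2) = (b : ZMod 2)) :=
  (ZMod.intCast_eq_intCast_iff a b 2).symm

/-- The second copy `B̄(B̃ₙ)` of the affine Weyl group of type `B̃ₙ` inside `W(C̃ₙ)`:
elements with `Σw ≡ minus(w) (mod 2)`. -/
def Bbar (n : ℕ) : Subgroup (WC n) where
  carrier := {w | sumV w ≡ (minusCard w : ℤ) [ZMOD 2]}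
  one_mem' := by
    show sumV (1 : WC n) ≡ ((minusCard (1 : WC n) : ℤ)) [ZMOD 2]
    rw [sumV_one, minusCard_one]
    rfl
  mul_mem' := by
    intro a b ha hb
    have ha' := intModEq_two_iff.mp ha
    have hb' := intModEq_two_iff.mp hb
    refine intModEq_two_iff.mpr ?_
    rw [sumV_mul, ha', hb']
    push_cast at ha' hb' ⊢
    rw [minusCard_mul]
  inv_mem' := by
    intro a ha
    have ha' := intModEq_two_iff.mp ha
    refine intModEq_two_iff.mpr ?_
    have h1 := sumV_mul a⁻¹ a
    have h2 := minusCard_mul a⁻¹ a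
    rw [inv_mul_cancel, sumV_one] at h1
    rw [inv_mul_cancel, minusCard_one] at h2
    push_cast at ha' h1 h2 ⊢
    linear_combination h1.symm - h2.symm - ha'

/-- The affine Weyl group of type `D̃ₙ`, as the intersection of the two `B̃ₙ`'s. -/
def WD (n : ℕ) : Subgroup (WC n) := WB n ⊓ Bbar n

instance : DecidablePred (fun k : ℤ => Even k) := fun _ => decidable_of_iff _ Int.even_iff.symm
instance : DecidablePred (fun k : ℤ => Odd k) := fun _ => decidable_of_iff _ Int.odd_iff.symm

/-- The labelled cycle type `(m, k_e, k_o, l)` of an element of `W(C̃ₙ)` (intended for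
involutions): `m` is the number of 2-cycles of `σ`, `k_e` (resp. `k_o`) is the number of
`i` with `σ(i) = -i` whose label `v_i` is even (resp. odd), and `l` is the number of fixed
points of `σ`. -/
def lct {n : ℕ} (x : WC n) : ℕ × ℕ × ℕ × ℕ :=
  ((Finset.univ.filter fun i : Fin n => ((x.sigma : Equiv.Perm (Pt n)) (1, i)).2 ≠ i).card / 2,
   (Finset.univ.filter fun i : Fin n =>
      (x.sigma : Equiv.Perm (Pt n)) (1, i) = (-1, i) ∧ Even (x.vec i)).card,
   (Finset.univ.filter fun i : Fin n =>
      (x.sigma : Equiv.Perm (Pt n)) (1, i) = (-1, i) ∧ Odd (x.vec i)).card,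
   (Finset.univ.filter fun i : Fin n => (x.sigma : Equiv.Perm (Pt n)) (1, i) = (1, i)).card)

/-- `f(x)`: twice the sum of the labels over one chosen entry of each 2-cycle (we choose the
entry with the smaller index), plus the sum of the labels over the negative 1-cycles.  Only
its residue modulo 4 is ever used, and for involutions that residue does not depend on the
choice of entries. -/
def fval {n : ℕ} (x : WC n) : ℤ :=
  2 * (∑ i ∈ Finset.univ.filter
        (fun i : Fin n => i < ((x.sigma : Equiv.Perm (Pt n)) (1, i)).2), x.vec i)
  + ∑ i ∈ Finset.univ.filter
      (fun i : Fin n => (x.sigma : Equiv.Perm (Pt n)) (1, i) = (-1, i)), x.vec i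

/-- The commuting graph on a set `X` of elements of a group: vertices are the elements
of `X`, and distinct vertices are adjacent exactly when they commute.  When `X` is a
conjugacy class of involutions this is the commuting involution graph `C(G,X)`. -/
def commGraph {M : Type*} [Group M] (X : Set M) : SimpleGraph X where
  Adj a b := a ≠ b ∧ (a : M) * (b : M) = (b : M) * (a : M)
  symm := ⟨fun a b h => ⟨h.1.symm, h.2.symm⟩⟩
  loopless := ⟨fun a h => h.1 rfl⟩

/-- The conjugacy class of `x` under conjugation by a subgroup `G`. -/
def ConjugacyClassOf {M : Type*} [Group M] (G : Subgroup M) (x : M) : Set M :=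
  {y | ∃ g ∈ G, g⁻¹ * x * g = y}

/-- `X` is a conjugacy class of involutions of the subgroup `G`. -/
def IsInvolutionConjClass {M : Type*} [Group M] (G : Subgroup M) (X : Set M) : Prop :=
  ∃ x ∈ G, orderOf x = 2 ∧ X = ConjugacyClassOf G x

/-- Sign change at the single coordinate `k`. -/
def negAt {n : ℕ} (k : Fin n) : Equiv.Perm (Pt n) :=
  Function.Involutive.toPerm (fun p => if p.2 = k then (-p.1, p.2) else p) (by
    intro p
    by_cases h : p.2 = k <;> simp [h, Prod.ext_iff])

lemma negAt_mem {n : ℕ} (k : Fin n) : negAt k ∈ Hgrp n := by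
  intro p
  show (if (negPt p).2 = k then (-(negPt p).1, (negPt p).2) else negPt p)
      = negPt (if p.2 = k then (-p.1, p.2) else p)
  by_cases h : p.2 = k <;> simp [negPt, h]

/-- The positive transposition of the coordinates `a` and `b`. -/
def swapPos {n : ℕ} (a b : Fin n) : Equiv.Perm (Pt n) :=
  Equiv.prodCongr (Equiv.refl ℤˣ) (Equiv.swap a b)

lemma swapPos_mem {n : ℕ} (a b : Fin n) : swapPos a b ∈ Hgrp n := fun _ => rfl

/-- The negative transposition of the coordinates `a` and `b` (for `a ≠ b` it sends
`a ↦ -b` and `b ↦ -a`). -/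
def negSwap {n : ℕ} (a b : Fin n) : Equiv.Perm (Pt n) := negAt b * negAt a * swapPos a b

lemma negSwap_mem {n : ℕ} (a b : Fin n) : negSwap a b ∈ Hgrp n :=
  mul_mem (mul_mem (negAt_mem b) (negAt_mem a)) (swapPos_mem a b)

/-- Constructor for elements of `W(C̃ₙ)`. -/
def mkW {n : ℕ} (σ : Equiv.Perm (Pt n)) (h : σ ∈ Hgrp n) (v : Fin n → ℤ) : WC n := ⟨⟨σ, h⟩, v⟩

/-- The simple reflection `r₁ = (σ, 0)` with `σ(1) = -1` (take `k = 0`); more generally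
`(σ, 0)` with `σ(k) = -k`. -/
def rFirstGen (n : ℕ) (k : Fin n) : WC n := mkW (negAt k) (negAt_mem k) 0

/-- The simple reflections `rᵢ = (σ, 0)`, `2 ≤ i ≤ n`, where `σ` exchanges `a` and `b`
positively (take `a, b` adjacent). -/
def swapGen (n : ℕ) (a b : Fin n) : WC n := mkW (swapPos a b) (swapPos_mem a b) 0

/-- The simple reflection `r_{n+1} = (σ, eₙ)` with `σ(n) = -n` (take `k = n-1`). -/
def rLastGen (n : ℕ) (k : Fin n) : WC n := mkW (negAt k) (negAt_mem k) (Pi.single k 1)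

/-- The reflections `s = (σ, e_{n-1} + eₙ)` (take `a = n-2`, `b = n-1`) and
`t = (σ, e₁ + e₂)` (take `a = 0`, `b = 1`), where `σ(a) = -b`, `σ(b) = -a`. -/
def negSwapGen (n : ℕ) (a b : Fin n) : WC n :=
  mkW (negSwap a b) (negSwap_mem a b) (Pi.single a 1 + Pi.single b 1)

/-- The projection `π : W(C̃ₙ) → Hₙ`, `(σ, v) ↦ σ`. -/
def projHom (n : ℕ) : WC n →* Equiv.Perm (Pt n) where
  toFun x := (x.sigma : Equiv.Perm (Pt n))
  map_one' := rfl
  map_mul' _ _ := rfl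

/-- The action of a signed permutation on real vectors. -/
def actR {n : ℕ} (σ : Equiv.Perm (Pt n)) (u : Fin n → ℝ) : Fin n → ℝ :=
  fun j => (((σ (1, j)).1 : ℤ) : ℝ) * u (σ (1, j)).2

/-- The affine action of `w = (σ,v) ∈ W(C̃ₙ)` on `ℝⁿ`: `u ↦ u^σ + v`. -/
def affAct {n : ℕ} (x : WC n) : (Fin n → ℝ) → (Fin n → ℝ) :=
  fun u => actR (x.sigma : Equiv.Perm (Pt n)) u + fun i => ((x.vec i : ℤ) : ℝ)

/-- The affine involution `φ` of `ℝⁿ` with `φ(u)ᵢ = 1/2 - u_{n+1-i}`. -/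
def phiR (n : ℕ) : (Fin n → ℝ) → (Fin n → ℝ) := fun u i => 1 / 2 - u i.rev


/-! ### Auxiliary infrastructure -/

namespace WC

variable {n : ℕ}

/-- Sign function of the signed permutation part. -/
def S (x : WC n) (i : Fin n) : ℤˣ := ((x.sigma : Equiv.Perm (Pt n)) (1, i)).1

/-- Underlying permutation of indices. -/
def P (x : WC n) (i : Fin n) : Fin n := ((x.sigma : Equiv.Perm (Pt n)) (1, i)).2

lemma sigma_apply (x : WC n) (ε : ℤˣ) (i : Fin n) :
    (x.sigma : Equiv.Perm (Pt n)) (ε, i) = (ε * S x i, P x i) :=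
  Hgrp_apply x.sigma.2 ε i

lemma sigma_one_apply (x : WC n) (i : Fin n) :
    (x.sigma : Equiv.Perm (Pt n)) (1, i) = (S x i, P x i) := by
  rw [sigma_apply, one_mul]

lemma P_mul (x y : WC n) (i : Fin n) : P (x * y) i = P x (P y i) := by
  unfold P
  rw [mul_sigma, Subgroup.coe_mul, Equiv.Perm.mul_apply, sigma_one_apply y i, sigma_apply x]
  rfl

lemma S_mul (x y : WC n) (i : Fin n) : S (x * y) i = S y i * S x (P y i) := by
  unfold S
  rw [mul_sigma, Subgroup.coe_mul, Equiv.Perm.mul_apply, sigma_one_apply y i, sigma_apply x]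
  rfl

lemma vec_mul' (x y : WC n) (i : Fin n) :
    (x * y).vec i = (S y i : ℤ) * x.vec (P y i) + y.vec i := by
  rw [mul_vec]
  rfl

@[simp] lemma S_one (i : Fin n) : S (1 : WC n) i = 1 := rfl
@[simp] lemma P_one (i : Fin n) : P (1 : WC n) i = i := rfl

lemma P_injective (x : WC n) : Function.Injective (P x) := by
  have := (permOf_bij x.sigma).1
  exact this

lemma units_sq (u : ℤˣ) : u * u = 1 := by
  rcases Int.units_eq_one_or u with h | h <;> subst h <;> decide

lemma units_cast_sq (u : ℤˣ) : (u : ℤ) * (u : ℤ) = 1 := by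
  rcases Int.units_eq_one_or u with h | h <;> subst h <;> decide

lemma even_units_mul (u : ℤˣ) (a : ℤ) : Even ((u : ℤ) * a) ↔ Even a := by
  rcases Int.units_eq_one_or u with h | h <;> subst h <;> simp

section Involution

variable {x : WC n} (hx : x * x = 1)

include hx

lemma P_P (i : Fin n) : P x (P x i) = i := by
  have h := P_mul x x i
  rw [hx, P_one] at h
  exact h.symm

lemma S_P (i : Fin n) : S x (P x i) = S x i := by
  have h := S_mul x x i
  rw [hx, S_one] at h
  have h2 := units_sq (S x i)
  calc S x (P x i) = S x i * (S x i * S x (P x i)) := by rw [← mul_assoc, units_sq, one_mul]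
  _ = S x i := by rw [← h, mul_one]

lemma vec_rel (i : Fin n) : (S x i : ℤ) * x.vec (P x i) + x.vec i = 0 := by
  have h := vec_mul' x x i
  rw [hx] at h
  have h0 : (1 : WC n).vec i = 0 := rfl
  rw [h0] at h
  exact h.symm

lemma vec_P (i : Fin n) : x.vec (P x i) = -(S x i : ℤ) * x.vec i := by
  have h := vec_rel hx i
  have h2 := units_cast_sq (S x i)
  linear_combination (S x i : ℤ) * h - x.vec (P x i) * h2

lemma vec_eq_zero_of_posfixed {i : Fin n} (h1 : P x i = i) (h2 : S x i = 1) :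
    x.vec i = 0 := by
  have h := vec_rel hx i
  rw [h1, h2] at h
  simpa using h

end Involution

lemma mul_self_eq_one_of_orderOf_eq_two {x : WC n} (h : orderOf x = 2) : x * x = 1 := by
  have := pow_orderOf_eq_one x
  rw [h, pow_two] at this
  exact this

/-- `lct` rewritten in terms of `S` and `P`. -/
lemma lct_eq (x : WC n) :
    lct x = ((Finset.univ.filter fun i : Fin n => P x i ≠ i).card / 2,
      (Finset.univ.filter fun i : Fin n => S x i = -1 ∧ P x i = i ∧ Even (x.vec i)).card,
      (Finset.univ.filter fun i : Fin n => S x i = -1 ∧ P x i = i ∧ ¬Even (x.vec i)).card,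
      (Finset.univ.filter fun i : Fin n => S x i = 1 ∧ P x i = i).card) := by
  have e1 : ∀ i : Fin n, (x.sigma : Equiv.Perm (Pt n)) (1, i) = (-1, i) ↔ (S x i = -1 ∧ P x i = i) := by
    intro i; rw [sigma_one_apply, Prod.mk.injEq]
  have e2 : ∀ i : Fin n, (x.sigma : Equiv.Perm (Pt n)) (1, i) = (1, i) ↔ (S x i = 1 ∧ P x i = i) := by
    intro i; rw [sigma_one_apply, Prod.mk.injEq]
  unfold lct
  refine Prod.ext rfl (Prod.ext ?_ (Prod.ext ?_ ?_)) <;> simp only [] <;> congr 1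
  · exact Finset.filter_congr fun i _ => by rw [e1 i]; tauto
  · exact Finset.filter_congr fun i _ => by rw [e1 i, ← Int.not_even_iff_odd]; tauto
  · exact Finset.filter_congr fun i _ => by rw [e2 i]

lemma minusCard_eq (x : WC n) :
    minusCard x = (Finset.univ.filter fun i : Fin n => S x i = -1).card := rfl

end WC

lemma zmod2_add_self : ∀ a : ZMod 2, a + a = 0 := by decide

lemma zmod2_neg : ∀ a : ZMod 2, -a = a := by decide

lemma zmod2_zero_or_one : ∀ a : ZMod 2, a = 0 ∨ a = 1 := by decide

lemma int_zmod2_eq_one {a : ℤ} (h : ¬Even a) : ((a : ZMod 2)) = 1 := by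
  rcases zmod2_zero_or_one (a : ZMod 2) with h0 | h1
  · exact absurd (even_int_iff_zmod.mpr h0) h
  · exact h1

namespace WC

variable {n : ℕ}

lemma mem_Bbar_iff (x : WC n) :
    x ∈ Bbar n ↔ ((sumV x : ℤ) : ZMod 2) = ((minusCard x : ℕ) : ZMod 2) := by
  have : x ∈ Bbar n ↔ sumV x ≡ ((minusCard x : ℕ) : ℤ) [ZMOD 2] := Iff.rfl
  rw [this, intModEq_two_iff, Int.cast_natCast]

/-- Sum over a `P x`-stable set of moved points of a `P x`-invariant `ZMod 2`-valued
function is zero. -/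
lemma stable_sum_zero (x : WC n) (hx : x * x = 1) (s : Finset (Fin n))
    (hmov : ∀ i ∈ s, P x i ≠ i) (hstab : ∀ i ∈ s, P x i ∈ s)
    (f : Fin n → ZMod 2) (hf : ∀ i, f (P x i) = f i) :
    ∑ i ∈ s, f i = 0 := by
  refine Finset.sum_involution (fun i _ => P x i) ?_ ?_ hstab ?_
  · intro a _
    rw [hf a, zmod2_add_self]
  · intro a ha _
    exact hmov a ha
  · intro a _
    exact P_P hx a

lemma vec_zmod_P (x : WC n) (hx : x * x = 1) (i : Fin n) :
    ((x.vec (P x i) : ℤ) : ZMod 2) = ((x.vec i : ℤ) : ZMod 2) := by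
  rw [vec_P hx i]
  push_cast
  rw [unitsCast_zmod2, zmod2_neg, one_mul]

lemma sumV_zmod (x : WC n) (hx : x * x = 1) :
    ((sumV x : ℤ) : ZMod 2)
      = (((Finset.univ.filter fun i : Fin n =>
            S x i = -1 ∧ P x i = i ∧ ¬Even (x.vec i)).card : ℕ) : ZMod 2) := by
  have h0 : ((sumV x : ℤ) : ZMod 2) = ∑ i, ((x.vec i : ℤ) : ZMod 2) := by
    unfold sumV; push_cast; rfl
  rw [h0]
  set f : Fin n → ZMod 2 := fun i => ((x.vec i : ℤ) : ZMod 2) with hfdef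
  have hsplit := Finset.sum_filter_add_sum_filter_not Finset.univ
    (fun i : Fin n => S x i = -1 ∧ P x i = i) f
  have hmoved : ∑ i ∈ Finset.univ.filter (fun i : Fin n => ¬(S x i = -1 ∧ P x i = i)), f i
      = ∑ i ∈ Finset.univ.filter (fun i : Fin n =>
          ¬(S x i = -1 ∧ P x i = i) ∧ P x i ≠ i), f i := by
    rw [← Finset.sum_filter_add_sum_filter_not
      (Finset.univ.filter (fun i : Fin n => ¬(S x i = -1 ∧ P x i = i)))
      (fun i => P x i ≠ i) f, Finset.filter_filter, Finset.filter_filter]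
    have hz : ∑ i ∈ Finset.univ.filter
        (fun i : Fin n => ¬(S x i = -1 ∧ P x i = i) ∧ ¬P x i ≠ i), f i = 0 := by
      apply Finset.sum_congr rfl ?_ |>.trans Finset.sum_const_zero
      intro i hi
      simp only [Finset.mem_filter, not_not] at hi
      obtain ⟨-, hni, hfix⟩ := hi
      have hS : S x i = 1 := by
        rcases Int.units_eq_one_or (S x i) with h | h
        · exact h
        · exact absurd ⟨h, hfix⟩ hni
      rw [hfdef]
      simp only []
      rw [vec_eq_zero_of_posfixed hx hfix hS]
      rfl
    rw [hz, add_zero]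
  have hmoved0 : ∑ i ∈ Finset.univ.filter (fun i : Fin n =>
      ¬(S x i = -1 ∧ P x i = i) ∧ P x i ≠ i), f i = 0 := by
    refine stable_sum_zero x hx _ ?_ ?_ f (vec_zmod_P x hx)
    · intro i hi
      exact (Finset.mem_filter.mp hi).2.2
    · intro i hi
      obtain ⟨-, hni, hmv⟩ := Finset.mem_filter.mp hi
      refine Finset.mem_filter.mpr ⟨Finset.mem_univ _, ?_, ?_⟩
      · rw [P_P hx i, S_P hx i]
        intro ⟨h1, h2⟩
        exact hmv h2.symm
      · rw [P_P hx i]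
        exact fun h => hmv h.symm
  have hneg : ∑ i ∈ Finset.univ.filter (fun i : Fin n => S x i = -1 ∧ P x i = i), f i
      = (((Finset.univ.filter fun i : Fin n =>
            S x i = -1 ∧ P x i = i ∧ ¬Even (x.vec i)).card : ℕ) : ZMod 2) := by
    rw [← Finset.sum_filter_add_sum_filter_not
      (Finset.univ.filter (fun i : Fin n => S x i = -1 ∧ P x i = i))
      (fun i => Even (x.vec i)) f, Finset.filter_filter, Finset.filter_filter]
    have he : ∑ i ∈ Finset.univ.filter
        (fun i : Fin n => (S x i = -1 ∧ P x i = i) ∧ Even (x.vec i)), f i = 0 := by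
      apply Finset.sum_congr rfl ?_ |>.trans Finset.sum_const_zero
      intro i hi
      obtain ⟨-, -, hev⟩ := Finset.mem_filter.mp hi
      exact even_int_iff_zmod.mp hev
    have ho : ∑ i ∈ Finset.univ.filter
        (fun i : Fin n => (S x i = -1 ∧ P x i = i) ∧ ¬Even (x.vec i)), f i
        = ((Finset.univ.filter (fun i : Fin n =>
            (S x i = -1 ∧ P x i = i) ∧ ¬Even (x.vec i))).card : ZMod 2) := by
      rw [Finset.card_eq_sum_ones]
      push_cast
      apply Finset.sum_congr rfl
      intro i hi
      obtain ⟨-, -, hev⟩ := Finset.mem_filter.mp hi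
      exact int_zmod2_eq_one hev
    rw [he, ho, zero_add]
    congr 2
    apply Finset.filter_congr
    intro i _
    tauto
  rw [← hsplit, hmoved, hmoved0, add_zero, hneg]

lemma minusCard_zmod (x : WC n) (hx : x * x = 1) :
    ((minusCard x : ℕ) : ZMod 2)
      = (((Finset.univ.filter fun i : Fin n => S x i = -1 ∧ P x i = i).card : ℕ) : ZMod 2) := by
  rw [minusCard_eq]
  have h0 : ∀ s : Finset (Fin n), ((s.card : ℕ) : ZMod 2) = ∑ _i ∈ s, (1 : ZMod 2) := by
    intro s
    rw [Finset.sum_const, nsmul_eq_mul, mul_one]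
  rw [h0, h0]
  rw [← Finset.sum_filter_add_sum_filter_not
    (Finset.univ.filter (fun i : Fin n => S x i = -1)) (fun i => P x i = i)
    (fun _ => (1 : ZMod 2)), Finset.filter_filter, Finset.filter_filter]
  have hz : ∑ i ∈ Finset.univ.filter (fun i : Fin n => S x i = -1 ∧ ¬P x i = i),
      (1 : ZMod 2) = 0 := by
    refine stable_sum_zero x hx _ ?_ ?_ _ (fun _ => rfl)
    · intro i hi
      exact (Finset.mem_filter.mp hi).2.2
    · intro i hi
      obtain ⟨-, hS, hmv⟩ := Finset.mem_filter.mp hi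
      refine Finset.mem_filter.mpr ⟨Finset.mem_univ _, ?_, ?_⟩
      · rw [S_P hx i]; exact hS
      · rw [P_P hx i]; exact fun h => hmv h.symm
  rw [hz, add_zero]

lemma natCast_zmod2_zero_iff (k : ℕ) : ((k : ZMod 2) = 0) ↔ Even k := by
  rw [ZMod.natCast_eq_zero_iff, even_iff_two_dvd]

lemma part1 (x : WC n) (hx : x * x = 1) :
    (x ∈ Bbar n ↔ Even ((Finset.univ.filter fun i : Fin n =>
        S x i = -1 ∧ P x i = i ∧ Even (x.vec i)).card)) := by
  rw [mem_Bbar_iff, sumV_zmod x hx, minusCard_zmod x hx]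
  have hsum : (Finset.univ.filter fun i : Fin n => S x i = -1 ∧ P x i = i).card
      = (Finset.univ.filter fun i : Fin n => S x i = -1 ∧ P x i = i ∧ Even (x.vec i)).card
        + (Finset.univ.filter fun i : Fin n =>
            S x i = -1 ∧ P x i = i ∧ ¬Even (x.vec i)).card := by
    rw [← Finset.card_filter_add_card_filter_not
      (s := Finset.univ.filter fun i : Fin n => S x i = -1 ∧ P x i = i)
      (p := fun i => Even (x.vec i)), Finset.filter_filter, Finset.filter_filter]
    congr 2 <;> exact Finset.filter_congr fun i _ => by tauto
  rw [hsum]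
  push_cast
  rw [← natCast_zmod2_zero_iff]
  exact right_eq_add

end WC

namespace WC

variable {n : ℕ}

lemma lct_eq_of_conj {x x' g : WC n} (hx : x * x = 1) (h : x * g = g * x') :
    lct x' = lct x := by
  have hP : ∀ i, P x (P g i) = P g (P x' i) := by
    intro i
    have h1 : P (x * g) i = P (g * x') i := by rw [h]
    rw [P_mul, P_mul] at h1
    exact h1
  have hS : ∀ i, S g i * S x (P g i) = S x' i * S g (P x' i) := by
    intro i
    have h1 : S (x * g) i = S (g * x') i := by rw [h]
    rw [S_mul, S_mul] at h1
    exact h1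
  have hV : ∀ i, (S g i : ℤ) * x.vec (P g i) + g.vec i
      = (S x' i : ℤ) * g.vec (P x' i) + x'.vec i := by
    intro i
    have h1 : (x * g).vec i = (g * x').vec i := by rw [h]
    rw [vec_mul', vec_mul'] at h1
    exact h1
  have hfix : ∀ i, P x' i = i ↔ P x (P g i) = P g i := by
    intro i
    constructor
    · intro hf
      rw [hP i, hf]
    · intro hf
      apply P_injective g
      rw [← hP i, hf]
  have hsgn : ∀ i, P x' i = i → S x (P g i) = S x' i := by
    intro i hf
    have h1 := hS i
    rw [hf, mul_comm (S x' i) (S g i)] at h1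
    exact mul_left_cancel h1
  have hvp : ∀ i, P x' i = i → S x' i = -1 → (Even (x'.vec i) ↔ Even (x.vec (P g i))) := by
    intro i hf hs
    have h1 := hV i
    rw [hf, hs] at h1
    have h2 : x'.vec i - (S g i : ℤ) * x.vec (P g i) = 2 * g.vec i := by
      push_cast at h1 ⊢
      linarith
    have h3 : Even (x'.vec i - (S g i : ℤ) * x.vec (P g i)) := ⟨g.vec i, by linarith⟩
    rw [Int.even_sub] at h3
    rw [h3, even_units_mul]
  rw [lct_eq x', lct_eq x]
  have hm : (Finset.univ.filter fun i : Fin n => P x' i ≠ i).card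
      = (Finset.univ.filter fun i : Fin n => P x i ≠ i).card := by
    apply Finset.card_equiv (permOf g.sigma)
    intro i
    simp only [Finset.mem_filter, Finset.mem_univ, true_and, permOf_apply]
    exact not_congr (hfix i)
  have hke : (Finset.univ.filter fun i : Fin n =>
        S x' i = -1 ∧ P x' i = i ∧ Even (x'.vec i)).card
      = (Finset.univ.filter fun i : Fin n =>
        S x i = -1 ∧ P x i = i ∧ Even (x.vec i)).card := by
    apply Finset.card_equiv (permOf g.sigma)
    intro i
    simp only [Finset.mem_filter, Finset.mem_univ, true_and, permOf_apply]
    constructor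
    · rintro ⟨h1, h2, h3⟩
      exact ⟨(hsgn i h2).trans h1, (hfix i).mp h2, (hvp i h2 h1).mp h3⟩
    · rintro ⟨h1, h2, h3⟩
      have hf := (hfix i).mpr h2
      have hs : S x' i = -1 := (hsgn i hf).symm.trans h1
      exact ⟨hs, hf, (hvp i hf hs).mpr h3⟩
  have hko : (Finset.univ.filter fun i : Fin n =>
        S x' i = -1 ∧ P x' i = i ∧ ¬Even (x'.vec i)).card
      = (Finset.univ.filter fun i : Fin n =>
        S x i = -1 ∧ P x i = i ∧ ¬Even (x.vec i)).card := by
    apply Finset.card_equiv (permOf g.sigma)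
    intro i
    simp only [Finset.mem_filter, Finset.mem_univ, true_and, permOf_apply]
    constructor
    · rintro ⟨h1, h2, h3⟩
      exact ⟨(hsgn i h2).trans h1, (hfix i).mp h2, (not_congr (hvp i h2 h1)).mp h3⟩
    · rintro ⟨h1, h2, h3⟩
      have hf := (hfix i).mpr h2
      have hs : S x' i = -1 := (hsgn i hf).symm.trans h1
      exact ⟨hs, hf, (not_congr (hvp i hf hs)).mpr h3⟩
  have hl : (Finset.univ.filter fun i : Fin n => S x' i = 1 ∧ P x' i = i).card
      = (Finset.univ.filter fun i : Fin n => S x i = 1 ∧ P x i = i).card := by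
    apply Finset.card_equiv (permOf g.sigma)
    intro i
    simp only [Finset.mem_filter, Finset.mem_univ, true_and, permOf_apply]
    constructor
    · rintro ⟨h1, h2⟩
      exact ⟨(hsgn i h2).trans h1, (hfix i).mp h2⟩
    · rintro ⟨h1, h2⟩
      have hf := (hfix i).mpr h2
      exact ⟨(hsgn i hf).symm.trans h1, hf⟩
  rw [hm, hke, hko, hl]

end WC

namespace WC

variable {n : ℕ}

lemma units_eq_neg_one {u : ℤˣ} (h : ¬u = 1) : u = -1 := by
  rcases Int.units_eq_one_or u with h1 | h1
  · exact absurd h1 h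
  · exact h1

/-- Classification of indices into five classes, for an involution. -/
def cls (x : WC n) (i : Fin n) : Fin 5 :=
  if P x i = i then (if S x i = 1 then 2 else if Even (x.vec i) then 0 else 1)
  else if i < P x i then 3 else 4

lemma cls_spec0 (x : WC n) (i : Fin n) :
    cls x i = 0 ↔ (S x i = -1 ∧ P x i = i ∧ Even (x.vec i)) := by
  unfold cls
  split_ifs with h1 h2 h3
  · exact iff_of_false (by decide)
      (by rintro ⟨hs, -, -⟩; rw [h2] at hs; exact absurd hs (by decide))
  · exact iff_of_true rfl ⟨units_eq_neg_one h2, h1, h3⟩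
  · exact iff_of_false (by decide) (by rintro ⟨-, -, he⟩; exact absurd he h3)
  · exact iff_of_false (by decide) (by rintro ⟨-, hp, -⟩; exact absurd hp h1)
  · exact iff_of_false (by decide) (by rintro ⟨-, hp, -⟩; exact absurd hp h1)

lemma cls_spec1 (x : WC n) (i : Fin n) :
    cls x i = 1 ↔ (S x i = -1 ∧ P x i = i ∧ ¬Even (x.vec i)) := by
  unfold cls
  split_ifs with h1 h2 h3
  · exact iff_of_false (by decide)
      (by rintro ⟨hs, -, -⟩; rw [h2] at hs; exact absurd hs (by decide))
  · exact iff_of_false (by decide) (by rintro ⟨-, -, he⟩; exact absurd h3 he)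
  · exact iff_of_true rfl ⟨units_eq_neg_one h2, h1, h3⟩
  · exact iff_of_false (by decide) (by rintro ⟨-, hp, -⟩; exact absurd hp h1)
  · exact iff_of_false (by decide) (by rintro ⟨-, hp, -⟩; exact absurd hp h1)

lemma cls_spec2 (x : WC n) (i : Fin n) :
    cls x i = 2 ↔ (S x i = 1 ∧ P x i = i) := by
  unfold cls
  split_ifs with h1 h2 h3
  · exact iff_of_true rfl ⟨h2, h1⟩
  · exact iff_of_false (by decide) (by rintro ⟨hs, -⟩; exact absurd hs h2)
  · exact iff_of_false (by decide) (by rintro ⟨hs, -⟩; exact absurd hs h2)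
  · exact iff_of_false (by decide) (by rintro ⟨-, hp⟩; exact absurd hp h1)
  · exact iff_of_false (by decide) (by rintro ⟨-, hp⟩; exact absurd hp h1)

lemma cls_spec3 (x : WC n) (i : Fin n) : cls x i = 3 ↔ i < P x i := by
  unfold cls
  split_ifs with h1 h2 h3 h4
  · exact iff_of_false (by decide) (by rw [h1]; exact lt_irrefl i)
  · exact iff_of_false (by decide) (by rw [h1]; exact lt_irrefl i)
  · exact iff_of_false (by decide) (by rw [h1]; exact lt_irrefl i)
  · exact iff_of_true rfl h4
  · exact iff_of_false (by decide) h4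

lemma cls_spec4 (x : WC n) (i : Fin n) : cls x i = 4 ↔ P x i < i := by
  unfold cls
  split_ifs with h1 h2 h3 h4
  · exact iff_of_false (by decide) (by rw [h1]; exact lt_irrefl i)
  · exact iff_of_false (by decide) (by rw [h1]; exact lt_irrefl i)
  · exact iff_of_false (by decide) (by rw [h1]; exact lt_irrefl i)
  · exact iff_of_false (by decide) (not_lt.mpr (le_of_lt h4))
  · exact iff_of_true rfl ((lt_or_gt_of_ne (Ne.symm h1)).resolve_left h4)

lemma corep_card (x : WC n) (hx : x * x = 1) :
    (Finset.univ.filter fun i : Fin n => P x i < i).card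
      = (Finset.univ.filter fun i : Fin n => i < P x i).card := by
  apply Finset.card_equiv (permOf x.sigma)
  intro i
  simp only [Finset.mem_filter, Finset.mem_univ, true_and, permOf_apply]
  show P x i < i ↔ P x i < P x (P x i)
  rw [P_P hx i]

lemma rep_card (x : WC n) (hx : x * x = 1) :
    (Finset.univ.filter fun i : Fin n => P x i ≠ i).card
      = 2 * (Finset.univ.filter fun i : Fin n => i < P x i).card := by
  have hunion : Finset.univ.filter (fun i : Fin n => P x i ≠ i)
      = (Finset.univ.filter fun i : Fin n => i < P x i)
        ∪ (Finset.univ.filter fun i : Fin n => P x i < i) := by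
    ext i
    simp only [Finset.mem_filter, Finset.mem_univ, true_and, Finset.mem_union]
    constructor
    · intro hne
      rcases lt_or_gt_of_ne hne with h | h
      · exact Or.inr h
      · exact Or.inl h
    · rintro (h | h)
      · exact (ne_of_gt h)
      · exact (ne_of_lt h)
  have hdisj : Disjoint (Finset.univ.filter fun i : Fin n => i < P x i)
      (Finset.univ.filter fun i : Fin n => P x i < i) := by
    rw [Finset.disjoint_left]
    intro i h1 h2
    simp only [Finset.mem_filter] at h1 h2
    exact absurd h2.2 (not_lt.mpr (le_of_lt h1.2))
  rw [hunion, Finset.card_union_of_disjoint hdisj, corep_card x hx, two_mul]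

/-- Generic: equal fiber counts give a bijection matching two colorings. -/
lemma exists_perm_comp_eq {α K : Type*} [Fintype α] [DecidableEq α] [DecidableEq K]
    (c c' : α → K)
    (h : ∀ k, (Finset.univ.filter fun i => c i = k).card
        = (Finset.univ.filter fun i => c' i = k).card) :
    ∃ β : α → α, Function.Bijective β ∧ ∀ i, c' (β i) = c i := by
  have hcard : ∀ k, Fintype.card {i // c i = k} = Fintype.card {i // c' i = k} := by
    intro k
    rw [Fintype.card_subtype, Fintype.card_subtype]
    exact h k
  have e : ∀ k, {i // c i = k} ≃ {i // c' i = k} := fun k => Fintype.equivOfCardEq (hcard k)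
  refine ⟨fun i => (e (c i) ⟨i, rfl⟩).1,
    ((Equiv.sigmaFiberEquiv c).symm.trans
      ((Equiv.sigmaCongrRight e).trans (Equiv.sigmaFiberEquiv c'))).bijective,
    fun i => (e (c i) ⟨i, rfl⟩).2⟩

end WC

namespace WC

variable {n : ℕ}

/-- The index part of the conjugating signed permutation. -/
def bfun (x x' : WC n) (b0 : Fin n → Fin n) : Fin n → Fin n :=
  fun i => if P x' i < i then P x (b0 (P x' i)) else b0 i

/-- The sign part of the conjugating signed permutation. -/
def dlt (x x' : WC n) (b0 : Fin n → Fin n) : Fin n → ℤˣ :=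
  fun i => if P x' i < i then S x (b0 (P x' i)) * S x' (P x' i) else 1

/-- The discrepancy to be corrected by the translation part. -/
def dint (x x' : WC n) (b0 : Fin n → Fin n) : Fin n → ℤ :=
  fun i => x'.vec i - (dlt x x' b0 i : ℤ) * x.vec (bfun x x' b0 i)

/-- The translation part of the conjugating element. -/
def tfun (x x' : WC n) (b0 : Fin n → Fin n) : Fin n → ℤ :=
  fun i => if P x' i < i then 0
    else if P x' i = i then dint x x' b0 i / 2 else dint x x' b0 i

section Construction

variable {x x' : WC n} {b0 : Fin n → Fin n}

lemma not_lt_self_of_eq {m : ℕ} {a b : Fin m} (h : a = b) : ¬a < b :=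
  fun hlt => lt_irrefl b (h ▸ hlt)

lemma bfun_notcor {i : Fin n} (h : ¬P x' i < i) : bfun x x' b0 i = b0 i := if_neg h

lemma bfun_cor {i : Fin n} (h : P x' i < i) :
    bfun x x' b0 i = P x (b0 (P x' i)) := if_pos h

lemma dlt_notcor {i : Fin n} (h : ¬P x' i < i) : dlt x x' b0 i = 1 := if_neg h

lemma dlt_cor {i : Fin n} (h : P x' i < i) :
    dlt x x' b0 i = S x (b0 (P x' i)) * S x' (P x' i) := if_pos h

variable (hx : x * x = 1) (hx' : x' * x' = 1) (hb0 : ∀ i, cls x (b0 i) = cls x' i)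

include hb0

lemma hrep_trans {i : Fin n} (hr : i < P x' i) : b0 i < P x (b0 i) :=
  (cls_spec3 x (b0 i)).mp (by rw [hb0 i]; exact (cls_spec3 x' i).mpr hr)

lemma hcor_trans {i : Fin n} (hc : P x' i < i) : P x (b0 i) < b0 i :=
  (cls_spec4 x (b0 i)).mp (by rw [hb0 i]; exact (cls_spec4 x' i).mpr hc)

lemma hnotcor_trans {i : Fin n} (hc : ¬P x' i < i) : ¬P x (b0 i) < b0 i := by
  intro hlt
  exact hc ((cls_spec4 x' i).mp (by rw [← hb0 i]; exact (cls_spec4 x (b0 i)).mpr hlt))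

include hx hx'

lemma hfix_trans {i : Fin n} (hf : P x' i = i) :
    P x (b0 i) = b0 i ∧ S x (b0 i) = S x' i
      ∧ (Even (x.vec (b0 i)) ↔ Even (x'.vec i)) := by
  rcases Int.units_eq_one_or (S x' i) with hs | hs
  · have hc : cls x' i = 2 := (cls_spec2 x' i).mpr ⟨hs, hf⟩
    obtain ⟨h1, h2⟩ := (cls_spec2 x (b0 i)).mp (by rw [hb0 i, hc])
    refine ⟨h2, h1.trans hs.symm, ?_⟩
    rw [vec_eq_zero_of_posfixed hx h2 h1, vec_eq_zero_of_posfixed hx' hf hs]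
  · by_cases he : Even (x'.vec i)
    · have hc : cls x' i = 0 := (cls_spec0 x' i).mpr ⟨hs, hf, he⟩
      obtain ⟨h1, h2, h3⟩ := (cls_spec0 x (b0 i)).mp (by rw [hb0 i, hc])
      exact ⟨h2, h1.trans hs.symm, iff_of_true h3 he⟩
    · have hc : cls x' i = 1 := (cls_spec1 x' i).mpr ⟨hs, hf, he⟩
      obtain ⟨h1, h2, h3⟩ := (cls_spec1 x (b0 i)).mp (by rw [hb0 i, hc])
      exact ⟨h2, h1.trans hs.symm, iff_of_false h3 he⟩

lemma bfun_corchar (i : Fin n) :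
    P x (bfun x x' b0 i) < bfun x x' b0 i ↔ P x' i < i := by
  by_cases hc : P x' i < i
  · refine iff_of_true ?_ hc
    rw [bfun_cor hc, P_P hx]
    have hj : P x' i < P x' (P x' i) := by rw [P_P hx']; exact hc
    exact hrep_trans hb0 hj
  · refine iff_of_false ?_ hc
    rw [bfun_notcor hc]
    exact hnotcor_trans hb0 hc

lemma bfun_P (i : Fin n) :
    bfun x x' b0 (P x' i) = P x (bfun x x' b0 i) := by
  rcases lt_trichotomy i (P x' i) with hr | hf | hc
  · have hcor : P x' (P x' i) < P x' i := by rw [P_P hx']; exact hr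
    rw [bfun_cor hcor, P_P hx', bfun_notcor (not_lt.mpr (le_of_lt hr))]
  · have hf' : P x' i = i := hf.symm
    rw [hf', bfun_notcor (not_lt_self_of_eq hf')]
    exact (hfix_trans hx hx' hb0 hf').1.symm
  · have hnc : ¬P x' (P x' i) < P x' i := by rw [P_P hx']; exact not_lt.mpr (le_of_lt hc)
    rw [bfun_notcor hnc, bfun_cor hc, P_P hx]

lemma bfun_inj (hb0inj : Function.Injective b0) :
    Function.Injective (bfun x x' b0) := by
  intro i j hij
  by_cases hci : P x' i < i <;> by_cases hcj : P x' j < j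
  · rw [bfun_cor hci, bfun_cor hcj] at hij
    have h2 := congrArg (P x) hij
    rw [P_P hx, P_P hx] at h2
    have h3 := hb0inj h2
    have h4 := congrArg (P x') h3
    rw [P_P hx', P_P hx'] at h4
    exact h4
  · exfalso
    have h1 := (bfun_corchar hx hx' hb0 i).mpr hci
    rw [hij] at h1
    exact (bfun_corchar hx hx' hb0 j).mp h1 |> hcj
  · exfalso
    have h1 := (bfun_corchar hx hx' hb0 j).mpr hcj
    rw [← hij] at h1
    exact (bfun_corchar hx hx' hb0 i).mp h1 |> hci
  · rw [bfun_notcor hci, bfun_notcor hcj] at hij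
    exact hb0inj hij

lemma dlt_sign (i : Fin n) :
    dlt x x' b0 i * S x (bfun x x' b0 i) = S x' i * dlt x x' b0 (P x' i) := by
  rcases lt_trichotomy i (P x' i) with hr | hf | hc
  · have hcor : P x' (P x' i) < P x' i := by rw [P_P hx']; exact hr
    rw [dlt_notcor (not_lt.mpr (le_of_lt hr)), bfun_notcor (not_lt.mpr (le_of_lt hr)),
      dlt_cor hcor, P_P hx', one_mul]
    rw [mul_comm (S x (b0 i)) (S x' i), ← mul_assoc, units_sq, one_mul]
  · have hf' : P x' i = i := hf.symm
    have hnc : ¬P x' i < i := not_lt_self_of_eq hf'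
    rw [hf', dlt_notcor hnc, bfun_notcor hnc, one_mul, mul_one,
      (hfix_trans hx hx' hb0 hf').2.1]
  · have hnc : ¬P x' (P x' i) < P x' i := by rw [P_P hx']; exact not_lt.mpr (le_of_lt hc)
    rw [dlt_notcor hnc, dlt_cor hc, bfun_cor hc, S_P hx, mul_one, mul_comm,
      ← mul_assoc, units_sq, one_mul, S_P hx']

lemma dlt_P (i : Fin n) :
    dlt x x' b0 (P x' i) = S x' i * (dlt x x' b0 i * S x (bfun x x' b0 i)) := by
  rw [dlt_sign hx hx' hb0 i, ← mul_assoc, units_sq, one_mul]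

lemma dint_P (i : Fin n) :
    dint x x' b0 (P x' i) = -(S x' i : ℤ) * dint x x' b0 i := by
  unfold dint
  rw [vec_P hx' i, bfun_P hx hx' hb0 i, vec_P hx (bfun x x' b0 i), dlt_P hx hx' hb0 i]
  push_cast
  linear_combination ((S x' i : ℤ) * (dlt x x' b0 i : ℤ) * x.vec (bfun x x' b0 i))
    * units_cast_sq (S x (bfun x x' b0 i))

lemma dint_fix_even {i : Fin n} (hf : P x' i = i) (hs : S x' i = -1) :
    Even (dint x x' b0 i) := by
  unfold dint
  rw [dlt_notcor (not_lt_self_of_eq hf), bfun_notcor (not_lt_self_of_eq hf)]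
  push_cast
  rw [one_mul, Int.even_sub]
  exact (hfix_trans hx hx' hb0 hf).2.2.symm

lemma dint_fix_pos {i : Fin n} (hf : P x' i = i) (hs : S x' i = 1) :
    dint x x' b0 i = 0 := by
  unfold dint
  rw [bfun_notcor (not_lt_self_of_eq hf),
    vec_eq_zero_of_posfixed hx (hfix_trans hx hx' hb0 hf).1
      ((hfix_trans hx hx' hb0 hf).2.1.trans hs),
    vec_eq_zero_of_posfixed hx' hf hs]
  ring

lemma tfun_eq (i : Fin n) :
    tfun x x' b0 i - (S x' i : ℤ) * tfun x x' b0 (P x' i) = dint x x' b0 i := by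
  rcases lt_trichotomy i (P x' i) with hr | hf | hc
  · have hcor : P x' (P x' i) < P x' i := by rw [P_P hx']; exact hr
    have h1 : tfun x x' b0 i = dint x x' b0 i := by
      unfold tfun
      rw [if_neg (not_lt.mpr (le_of_lt hr)), if_neg (ne_of_gt hr)]
    have h2 : tfun x x' b0 (P x' i) = 0 := by
      unfold tfun
      rw [if_pos hcor]
    rw [h1, h2, mul_zero, sub_zero]
  · have hf' : P x' i = i := hf.symm
    have h1 : tfun x x' b0 i = dint x x' b0 i / 2 := by
      unfold tfun
      rw [if_neg (not_lt_self_of_eq hf'), if_pos hf']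
    rw [hf', h1]
    rcases Int.units_eq_one_or (S x' i) with hs | hs
    · rw [hs, dint_fix_pos hx hx' hb0 hf' hs] <;> norm_num
    · rw [hs]
      have he := dint_fix_even hx hx' hb0 hf' hs
      have h2 := Int.two_mul_ediv_two_of_even he
      push_cast
      linarith
  · have h1 : tfun x x' b0 i = 0 := by
      unfold tfun
      rw [if_pos hc]
    have hnc : ¬P x' (P x' i) < P x' i := by rw [P_P hx']; exact not_lt.mpr (le_of_lt hc)
    have hne : ¬P x' (P x' i) = P x' i := by rw [P_P hx']; exact ne_of_gt hc
    have h2 : tfun x x' b0 (P x' i) = dint x x' b0 (P x' i) := by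
      unfold tfun
      rw [if_neg hnc, if_neg hne]
    rw [h1, h2, dint_P hx hx' hb0 i]
    linear_combination (dint x x' b0 i) * units_cast_sq (S x' i)

lemma main_vec (i : Fin n) :
    (dlt x x' b0 i : ℤ) * x.vec (bfun x x' b0 i) + tfun x x' b0 i
      = (S x' i : ℤ) * tfun x x' b0 (P x' i) + x'.vec i := by
  have h := tfun_eq hx hx' hb0 i
  unfold dint at h
  linarith

end Construction

lemma Hgrp_eq_of_agree {σ τ : Equiv.Perm (Pt n)} (hσ : σ ∈ Hgrp n) (hτ : τ ∈ Hgrp n)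
    (h : ∀ i, σ (1, i) = τ (1, i)) : σ = τ := by
  apply Equiv.ext
  rintro ⟨ε, i⟩
  rcases Int.units_eq_one_or ε with rfl | rfl
  · exact h i
  · have h1 : σ (negPt (1, i)) = negPt (σ (1, i)) := hσ (1, i)
    have h2 : τ (negPt (1, i)) = negPt (τ (1, i)) := hτ (1, i)
    have h3 : ((-1 : ℤˣ), i) = negPt (1, i) := rfl
    rw [h3, h1, h2, h i]

lemma exists_conj_of_lct_eq {x x' : WC n} (hx : x * x = 1) (hx' : x' * x' = 1)
    (h : lct x' = lct x) : ∃ g : WC n, x * g = g * x' := by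
  rw [lct_eq, lct_eq, Prod.mk.injEq, Prod.mk.injEq, Prod.mk.injEq] at h
  obtain ⟨hm, hke, hko, hl⟩ := h
  have hrep : (Finset.univ.filter fun i : Fin n => i < P x' i).card
      = (Finset.univ.filter fun i : Fin n => i < P x i).card := by
    have h1 := rep_card x hx
    have h2 := rep_card x' hx'
    omega
  have hcls : ∀ k : Fin 5,
      (Finset.univ.filter fun i : Fin n => cls x' i = k).card
        = (Finset.univ.filter fun i : Fin n => cls x i = k).card := by
    intro k
    have h5 : ∀ k : Fin 5, k = 0 ∨ k = 1 ∨ k = 2 ∨ k = 3 ∨ k = 4 := by decide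
    rcases h5 k with rfl | rfl | rfl | rfl | rfl
    · rw [Finset.filter_congr (fun i _ => cls_spec0 x' i),
        Finset.filter_congr (fun i _ => cls_spec0 x i)]
      exact hke
    · rw [Finset.filter_congr (fun i _ => cls_spec1 x' i),
        Finset.filter_congr (fun i _ => cls_spec1 x i)]
      exact hko
    · rw [Finset.filter_congr (fun i _ => cls_spec2 x' i),
        Finset.filter_congr (fun i _ => cls_spec2 x i)]
      exact hl
    · rw [Finset.filter_congr (fun i _ => cls_spec3 x' i),
        Finset.filter_congr (fun i _ => cls_spec3 x i)]
      exact hrep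
    · rw [Finset.filter_congr (fun i _ => cls_spec4 x' i),
        Finset.filter_congr (fun i _ => cls_spec4 x i)]
      rw [corep_card x hx, corep_card x' hx']
      exact hrep
  obtain ⟨b0, hb0bij, hb0⟩ := exists_perm_comp_eq (cls x') (cls x) hcls
  -- the signed permutation
  have hFinj : Function.Injective
      (fun z : Pt n => ((z.1 * dlt x x' b0 z.2, bfun x x' b0 z.2) : Pt n)) := by
    rintro ⟨ε, i⟩ ⟨ε', j⟩ hF
    simp only [Prod.mk.injEq] at hF
    obtain ⟨h1, h2⟩ := hF
    have hij : i = j := bfun_inj hx hx' hb0 hb0bij.1 h2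
    subst hij
    have : ε = ε' := by
      have := mul_right_cancel h1
      exact this
    rw [this]
  have hFbij : Function.Bijective
      (fun z : Pt n => ((z.1 * dlt x x' b0 z.2, bfun x x' b0 z.2) : Pt n)) := by
    rw [Fintype.bijective_iff_injective_and_card]
    exact ⟨hFinj, rfl⟩
  set ρ : Equiv.Perm (Pt n) := Equiv.ofBijective _ hFbij with hρ
  have hρ_apply : ∀ z : Pt n, ρ z = (z.1 * dlt x x' b0 z.2, bfun x x' b0 z.2) :=
    fun z => rfl
  have hρmem : ρ ∈ Hgrp n := by
    intro z
    rw [hρ_apply, hρ_apply]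
    simp [negPt, neg_mul]
  refine ⟨mkW ρ hρmem (tfun x x' b0), ?_⟩
  have hgS : ∀ i, S (mkW ρ hρmem (tfun x x' b0)) i = dlt x x' b0 i := by
    intro i
    show (ρ (1, i)).1 = dlt x x' b0 i
    rw [hρ_apply]
    exact one_mul _
  have hgP : ∀ i, P (mkW ρ hρmem (tfun x x' b0)) i = bfun x x' b0 i := by
    intro i
    show (ρ (1, i)).2 = bfun x x' b0 i
    rw [hρ_apply]
  refine WC.ext ?_ ?_
  · show x.sigma * (mkW ρ hρmem (tfun x x' b0)).sigma
      = (mkW ρ hρmem (tfun x x' b0)).sigma * x'.sigma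
    apply Subtype.ext
    rw [Subgroup.coe_mul, Subgroup.coe_mul]
    apply Hgrp_eq_of_agree (mul_mem x.sigma.2 hρmem) (mul_mem hρmem x'.sigma.2)
    intro i
    rw [Equiv.Perm.mul_apply, Equiv.Perm.mul_apply, hρ_apply, sigma_one_apply x',
      hρ_apply, one_mul]
    rw [sigma_apply x (dlt x x' b0 i) (bfun x x' b0 i)]
    exact Prod.ext (dlt_sign hx hx' hb0 i) (bfun_P hx hx' hb0 i).symm
  · show actV ((mkW ρ hρmem (tfun x x' b0)).sigma : Equiv.Perm (Pt n)) x.vec + tfun x x' b0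
      = actV (x'.sigma : Equiv.Perm (Pt n)) (tfun x x' b0) + x'.vec
    funext i
    show actV ρ x.vec i + tfun x x' b0 i
      = actV (x'.sigma : Equiv.Perm (Pt n)) (tfun x x' b0) i + x'.vec i
    unfold actV
    rw [hρ_apply, sigma_one_apply x']
    simp only [one_mul]
    exact main_vec hx hx' hb0 i

end WC

namespace WC

variable {n : ℕ}

/-- The parity invariant cutting out `B̄(B̃ₙ)`. -/
def phi (w : WC n) : ZMod 2 := ((sumV w : ℤ) : ZMod 2) + ((minusCard w : ℕ) : ZMod 2)

lemma phi_mul (x y : WC n) : phi (x * y) = phi x + phi y := by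
  unfold phi
  rw [sumV_mul, minusCard_mul]
  ring

lemma mem_Bbar_phi (x : WC n) : x ∈ Bbar n ↔ phi x = 0 := by
  rw [mem_Bbar_iff]
  unfold phi
  have : ∀ a b : ZMod 2, (a = b ↔ a + b = 0) := by decide
  exact this _ _

lemma cent_posfixed {x : WC n} (hx : x * x = 1) {i : Fin n}
    (hS : S x i = 1) (hP : P x i = i) :
    ∃ hh : WC n, x * hh = hh * x ∧ phi hh = 1 := by
  refine ⟨⟨1, Pi.single i 1⟩, ?_, ?_⟩
  · have hS1 : ∀ j, S (⟨1, Pi.single i 1⟩ : WC n) j = 1 := fun j => rfl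
    have hP1 : ∀ j, P (⟨1, Pi.single i 1⟩ : WC n) j = j := fun j => rfl
    refine WC.ext ?_ ?_
    · show x.sigma * 1 = 1 * x.sigma
      rw [mul_one, one_mul]
    · funext j
      show (x * ⟨1, Pi.single i 1⟩).vec j = ((⟨1, Pi.single i 1⟩ : WC n) * x).vec j
      rw [vec_mul', vec_mul', hS1, hP1]
      have hv : (⟨1, Pi.single i 1⟩ : WC n).vec = Pi.single i 1 := rfl
      rw [hv]
      by_cases hj : j = i
      · subst hj
        rw [hP, hS]
        simp [add_comm]
      · have hPj : P x j ≠ i := by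
          intro hc
          exact hj (P_injective x (hc.trans hP.symm))
        rw [Pi.single_apply, Pi.single_apply, if_neg hj, if_neg hPj]
        simp
  · unfold phi
    have h1 : sumV (⟨1, Pi.single i 1⟩ : WC n) = 1 := by
      unfold sumV
      show (∑ j, Pi.single i (1 : ℤ) j) = 1
      exact Fintype.sum_pi_single' i 1
    have h2 : minusCard (⟨1, Pi.single i 1⟩ : WC n) = 0 := by
      rw [minusCard_eq, Finset.card_eq_zero, Finset.filter_eq_empty_iff]
      intro j _
      show ¬(1 : ℤˣ) = -1
      decide
    rw [h1, h2]
    decide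

lemma negAt_apply (k : Fin n) (p : Pt n) :
    negAt k p = if p.2 = k then (-p.1, p.2) else p := by
  unfold negAt
  rfl

lemma cent_negfixed {x : WC n} (hx : x * x = 1) {i : Fin n}
    (hS : S x i = -1) (hP : P x i = i) (hEv : Even (x.vec i)) :
    ∃ hh : WC n, x * hh = hh * x ∧ phi hh = 1 := by
  refine ⟨mkW (negAt i) (negAt_mem i) (Pi.single i (x.vec i)), ?_, ?_⟩
  · have hS2 : ∀ j, S (mkW (negAt i) (negAt_mem i) (Pi.single i (x.vec i))) j
        = (if j = i then -1 else 1) := by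
      intro j
      show (negAt i (1, j)).1 = _
      rw [negAt_apply]
      by_cases hj : j = i <;> simp [hj]
    have hP2 : ∀ j, P (mkW (negAt i) (negAt_mem i) (Pi.single i (x.vec i))) j = j := by
      intro j
      show (negAt i (1, j)).2 = _
      rw [negAt_apply]
      by_cases hj : j = i <;> simp [hj]
    refine WC.ext ?_ ?_
    · apply Subtype.ext
      apply Hgrp_eq_of_agree
        (x * mkW (negAt i) (negAt_mem i) (Pi.single i (x.vec i))).sigma.2
        (mkW (negAt i) (negAt_mem i) (Pi.single i (x.vec i)) * x).sigma.2
      intro j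
      show (x.sigma : Equiv.Perm (Pt n)) (negAt i (1, j))
        = negAt i ((x.sigma : Equiv.Perm (Pt n)) (1, j))
      rw [negAt_apply, sigma_one_apply x, negAt_apply]
      by_cases hj : j = i
      · subst hj
        rw [if_pos (rfl : ((1 : ℤˣ), j).2 = j), if_pos (show (S x j, P x j).2 = j from hP),
          sigma_apply x (-1) j, hS, hP]
        exact Prod.ext (show ((-1 : ℤˣ)) * -1 = -(-1) by decide) rfl
      · have hPj : P x j ≠ i := fun hc => hj (P_injective x (hc.trans hP.symm))
        rw [if_neg (show ¬((1 : ℤˣ), j).2 = i from hj),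
          if_neg (show ¬(S x j, P x j).2 = i from hPj), sigma_one_apply x]
    · funext j
      rw [vec_mul', vec_mul', hS2, hP2]
      have hv : (mkW (negAt i) (negAt_mem i) (Pi.single i (x.vec i))).vec
          = Pi.single i (x.vec i) := rfl
      rw [hv]
      by_cases hj : j = i
      · subst hj
        rw [hP, hS]
        simp
      · have hPj : P x j ≠ i := fun hc => hj (P_injective x (hc.trans hP.symm))
        rw [Pi.single_apply, Pi.single_apply, if_neg hj, if_neg hj, if_neg hPj]
        simp
  · unfold phi
    have h1 : sumV (mkW (negAt i) (negAt_mem i) (Pi.single i (x.vec i))) = x.vec i := by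
      unfold sumV
      show (∑ j, Pi.single i (x.vec i) j) = x.vec i
      exact Fintype.sum_pi_single' i _
    have h2 : minusCard (mkW (negAt i) (negAt_mem i) (Pi.single i (x.vec i))) = 1 := by
      rw [minusCard_eq]
      have h3 : (Finset.univ.filter fun j : Fin n =>
            S (mkW (negAt i) (negAt_mem i) (Pi.single i (x.vec i))) j = -1)
          = Finset.univ.filter fun j : Fin n => j = i := by
        apply Finset.filter_congr
        intro j _
        show ((negAt i (1, j)).1 = -1) ↔ _
        rw [negAt_apply]
        by_cases hj : j = i <;> simp [hj]
      rw [h3, Finset.filter_eq', if_pos (Finset.mem_univ i), Finset.card_singleton]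
    rw [h1, h2]
    rw [even_int_iff_zmod.mp hEv]
    decide

end WC

theorem Bbar_involutions_and_conjugacy (n : ℕ) :
    (∀ (x : WC n), orderOf x = 2 → ∀ m ke ko l : ℕ, lct x = (m, ke, ko, l) →
      (x ∈ Bbar n ↔ Even ke)) ∧
    (∀ x x' : WC n, x ∈ Bbar n → x' ∈ Bbar n → orderOf x = 2 → orderOf x' = 2 →
      ∀ m ke ko l : ℕ, lct x = (m, ke, ko, l) → (0 < ke ∨ 0 < l) →
        ((∃ g ∈ Bbar n, g⁻¹ * x * g = x') ↔ lct x' = lct x)) := by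
  constructor
  · intro x hord m ke ko l hlct
    have hx := WC.mul_self_eq_one_of_orderOf_eq_two hord
    rw [WC.lct_eq, Prod.mk.injEq, Prod.mk.injEq, Prod.mk.injEq] at hlct
    obtain ⟨-, hke, -, -⟩ := hlct
    rw [← hke]
    exact WC.part1 x hx
  · intro x x' hxB hx'B hord hord' m ke ko l hlct hkl
    have hx := WC.mul_self_eq_one_of_orderOf_eq_two hord
    have hx' := WC.mul_self_eq_one_of_orderOf_eq_two hord'
    constructor
    · rintro ⟨g, hgB, hconj⟩
      have hxg : x * g = g * x' := by
        rw [← hconj]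
        group
      exact WC.lct_eq_of_conj hx hxg
    · intro hll
      obtain ⟨g, hxg⟩ := WC.exists_conj_of_lct_eq hx hx' hll
      have hcent : ∃ hh : WC n, x * hh = hh * x ∧ WC.phi hh = 1 := by
        rw [WC.lct_eq, Prod.mk.injEq, Prod.mk.injEq, Prod.mk.injEq] at hlct
        obtain ⟨-, hke, -, hl⟩ := hlct
        rcases hkl with hk0 | hl0
        · obtain ⟨i, hi⟩ := Finset.card_pos.mp (by rw [hke]; exact hk0)
          obtain ⟨-, h1, h2, h3⟩ := Finset.mem_filter.mp hi
          exact WC.cent_negfixed hx h1 h2 h3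
        · obtain ⟨i, hi⟩ := Finset.card_pos.mp (by rw [hl]; exact hl0)
          obtain ⟨-, h1, h2⟩ := Finset.mem_filter.mp hi
          exact WC.cent_posfixed hx h1 h2
      obtain ⟨hh, hcomm, hphi⟩ := hcent
      by_cases hgB : g ∈ Bbar n
      · refine ⟨g, hgB, ?_⟩
        rw [mul_assoc, hxg, ← mul_assoc, inv_mul_cancel, one_mul]
      · refine ⟨hh * g, ?_, ?_⟩
        · rw [WC.mem_Bbar_phi] at hgB ⊢
          rw [WC.phi_mul, hphi]
          rcases zmod2_zero_or_one (WC.phi g) with h0 | h1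
          · exact absurd h0 hgB
          · rw [h1]
            decide
        · have hxhg : x * (hh * g) = (hh * g) * x' := by
            rw [← mul_assoc, hcomm, mul_assoc, hxg, ← mul_assoc]
          rw [mul_assoc, hxhg, ← mul_assoc, inv_mul_cancel, one_mul]
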